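/- For every real z > 0, the digamma function satisfies ψ(z) = log z + sum over n from 0 to ∞ of 1/(n+1) * (sum over k from 0 to n of binomial(n,k) * (-1)^k * log(1 + k/z)), where the outer series converges. -/

import Mathlib

open Real MeasureTheory Set Filter Topology intervalIntegral

namespace DigammaAux



lemma one_sub_exp_pos {x : ℝ} (hx : 0 < x) : 0 < 1 - Real.exp (-x) := by
  simp [Real.exp_lt_one_iff.mpr (by linarith : -x < 0)]

lemma one_sub_exp_lt {x : ℝ} (hx : 0 < x) : 1 - Real.exp (-x) < x := by
  nlinarith [Real.add_one_lt_exp (by linarith : (-x : ℝ) ≠ 0)]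

/-- kernel `1/(1-e^{-x}) - 1/x` is in `[0,1]` for `x > 0`. -/
lemma kernel_nonneg {x : ℝ} (hx : 0 < x) : 0 ≤ 1 / (1 - Real.exp (-x)) - 1 / x := by
  have h1 := one_sub_exp_pos hx
  have h2 := one_sub_exp_lt hx
  rw [sub_nonneg]
  exact one_div_le_one_div_of_le h1 h2.le

lemma kernel_le_one {x : ℝ} (hx : 0 < x) : 1 / (1 - Real.exp (-x)) - 1 / x ≤ 1 := by
  have h1 := one_sub_exp_pos hx
  have key : x - (1 - Real.exp (-x)) < (1 - Real.exp (-x)) * x := by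
    have h3 := Real.add_one_lt_exp (by linarith : (-x : ℝ) ≠ 0)
    have h4 : Real.exp (-x) * (x + 1) < 1 := by
      have := Real.exp_pos (-x)
      calc Real.exp (-x) * (x + 1) < Real.exp (-x) * Real.exp x := by nlinarith [Real.add_one_lt_exp (by linarith : (x:ℝ) ≠ 0)]
        _ = 1 := by rw [← Real.exp_add]; simp
    nlinarith
  rw [div_sub_div _ _ h1.ne' hx.ne', div_le_one (by positivity)]
  nlinarith

lemma integral_exp_neg_mul_Ioi {t : ℝ} (ht : 0 < t) :
    ∫ x in Ioi (0:ℝ), Real.exp (-(x * t)) = 1 / t := by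
  have := integral_comp_mul_right_Ioi (fun y => Real.exp (-y)) 0 ht
  simp only [zero_mul, smul_eq_mul] at this
  rw [this, integral_exp_neg_Ioi_zero]
  simp [one_div]

lemma integrableOn_exp_neg_mul {t : ℝ} (ht : 0 < t) :
    IntegrableOn (fun x : ℝ => Real.exp (-(t * x))) (Ioi 0) := by
  simpa [neg_mul] using exp_neg_integrableOn_Ioi 0 ht



lemma intervalIntegral_exp_neg_mul {x : ℝ} (hx : x ≠ 0) (a b : ℝ) :
    ∫ t in a..b, Real.exp (-(x * t)) = (Real.exp (-(x*a)) - Real.exp (-(x*b))) / x := by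
  have key : ∀ t : ℝ, HasDerivAt (fun u => -Real.exp (-(x * u)) / x) (Real.exp (-(x * t))) t := by
    intro t
    have h1 : HasDerivAt (fun u : ℝ => -(x * u)) (-x) t := by
      have := ((hasDerivAt_id t).const_mul x).neg
      simp only [mul_one] at this
      exact this
    have h2 := (h1.exp).neg.div_const x
    refine h2.congr_deriv ?_
    field_simp
  rw [intervalIntegral.integral_eq_sub_of_hasDerivAt (fun t _ => key t)
    ((Real.continuous_exp.comp (by continuity)).intervalIntegrable a b)]
  ring

lemma frullani_integrand_abs_le {a b x : ℝ} (ha : 0 < a) (hb : 0 < b) (hx : 0 < x) :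
    |(Real.exp (-(a*x)) - Real.exp (-(b*x))) / x| ≤ |b - a| * Real.exp (-(min a b * x)) := by
  rcases le_total a b with hab | hab
  · have h1 : Real.exp (-(b*x)) ≤ Real.exp (-(a*x)) := by
      apply Real.exp_le_exp.mpr; nlinarith
    have h2 : Real.exp (-(a*x)) - Real.exp (-(b*x)) ≤ (b - a) * x * Real.exp (-(a*x)) := by
      have : Real.exp (-(b*x)) = Real.exp (-(a*x)) * Real.exp (-((b-a)*x)) := by
        rw [← Real.exp_add]; ring_nf
      rw [this]
      have h3 : 1 - Real.exp (-((b-a)*x)) ≤ (b-a)*x := by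
        nlinarith [Real.add_one_le_exp (-((b-a)*x))]
      nlinarith [Real.exp_pos (-(a*x))]
    rw [abs_div, abs_of_nonneg (by linarith), abs_of_pos hx, div_le_iff₀ hx,
      abs_of_nonneg (by linarith : (0:ℝ) ≤ b - a), min_eq_left hab]
    nlinarith
  · have h1 : Real.exp (-(a*x)) ≤ Real.exp (-(b*x)) := by
      apply Real.exp_le_exp.mpr; nlinarith
    have h2 : Real.exp (-(b*x)) - Real.exp (-(a*x)) ≤ (a - b) * x * Real.exp (-(b*x)) := by
      have : Real.exp (-(a*x)) = Real.exp (-(b*x)) * Real.exp (-((a-b)*x)) := by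
        rw [← Real.exp_add]; ring_nf
      rw [this]
      have h3 : 1 - Real.exp (-((a-b)*x)) ≤ (a-b)*x := by
        nlinarith [Real.add_one_le_exp (-((a-b)*x))]
      nlinarith [Real.exp_pos (-(b*x))]
    rw [abs_div, abs_sub_comm, abs_of_nonneg (by linarith), abs_of_pos hx, div_le_iff₀ hx,
      abs_of_nonpos (by linarith : b - a ≤ 0), min_eq_right hab]
    nlinarith

lemma frullani_integrable {a b : ℝ} (ha : 0 < a) (hb : 0 < b) :
    IntegrableOn (fun x : ℝ => (Real.exp (-(a*x)) - Real.exp (-(b*x))) / x) (Ioi 0) := by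
  have hmin : 0 < min a b := lt_min ha hb
  have hint : IntegrableOn (fun x : ℝ => |b - a| * Real.exp (-(min a b * x))) (Ioi 0) := by
    simpa [neg_mul, IntegrableOn] using (exp_neg_integrableOn_Ioi 0 hmin).const_mul |b - a|
  refine hint.mono' ?_ ?_
  · apply ContinuousOn.aestronglyMeasurable ?_ measurableSet_Ioi
    apply ContinuousOn.div
    · exact (Continuous.continuousOn (by continuity))
    · exact continuousOn_id
    · intro x hx; exact ne_of_gt hx
  · filter_upwards [ae_restrict_mem measurableSet_Ioi] with x hx
    calc ‖(Real.exp (-(a*x)) - Real.exp (-(b*x))) / x‖ = |(Real.exp (-(a*x)) - Real.exp (-(b*x))) / x| := rfl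
      _ ≤ |b - a| * Real.exp (-(min a b * x)) := frullani_integrand_abs_le ha hb hx

lemma frullani_of_le {a b : ℝ} (ha : 0 < a) (hab : a ≤ b) :
    ∫ x in Ioi (0:ℝ), (Real.exp (-(a*x)) - Real.exp (-(b*x))) / x = Real.log b - Real.log a := by
  have hb : 0 < b := lt_of_lt_of_le ha hab
  have key : ∀ x ∈ Ioi (0:ℝ), (Real.exp (-(a*x)) - Real.exp (-(b*x))) / x
      = ∫ t in Ioc a b, Real.exp (-(x*t)) := by
    intro x hx
    rw [← intervalIntegral.integral_of_le hab, intervalIntegral_exp_neg_mul (ne_of_gt hx)]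
    ring_nf
  rw [setIntegral_congr_fun measurableSet_Ioi key]
  have hprod : Integrable (Function.uncurry fun x t => Real.exp (-(x*t)))
      ((volume.restrict (Ioi (0:ℝ))).prod (volume.restrict (Ioc a b))) := by
    have hbound : Integrable (fun p : ℝ × ℝ => Real.exp (-(a * p.1)) * 1)
        ((volume.restrict (Ioi (0:ℝ))).prod (volume.restrict (Ioc a b))) := by
      have h1 : Integrable (fun x : ℝ => Real.exp (-(a * x))) (volume.restrict (Ioi (0:ℝ))) := by
        simpa [neg_mul, IntegrableOn] using exp_neg_integrableOn_Ioi 0 ha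
      have h2 : Integrable (fun _ : ℝ => (1:ℝ)) (volume.restrict (Ioc a b)) :=
        (integrableOn_const (μ := volume) (C := (1:ℝ)) measure_Ioc_lt_top.ne : IntegrableOn (fun _ : ℝ => (1:ℝ)) (Ioc a b) volume)
      exact h1.mul_prod h2
    refine hbound.mono' ?_ ?_
    · exact (Continuous.aestronglyMeasurable (by fun_prop))
    · rw [Measure.prod_restrict]
      filter_upwards [ae_restrict_mem (measurableSet_Ioi.prod measurableSet_Ioc)] with p hp
      obtain ⟨hp1, hp2⟩ := hp
      simp only [Function.uncurry, norm_eq_abs, abs_exp, mul_one]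
      apply Real.exp_le_exp.mpr
      simp only [mem_Ioi] at hp1
      simp only [mem_Ioc] at hp2
      nlinarith
  rw [integral_integral_swap hprod]
  have key2 : ∀ t ∈ Ioc a b, (∫ x in Ioi (0:ℝ), Real.exp (-(x*t))) = 1 / t := by
    intro t ht
    exact integral_exp_neg_mul_Ioi (lt_of_lt_of_le ha ht.1.le)
  rw [setIntegral_congr_fun measurableSet_Ioc key2, ← intervalIntegral.integral_of_le hab,
    integral_one_div_of_pos ha hb, Real.log_div hb.ne' ha.ne']

lemma frullani {a b : ℝ} (ha : 0 < a) (hb : 0 < b) :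
    ∫ x in Ioi (0:ℝ), (Real.exp (-(a*x)) - Real.exp (-(b*x))) / x = Real.log b - Real.log a := by
  rcases le_total a b with hab | hab
  · exact frullani_of_le ha hab
  · have := frullani_of_le hb hab
    rw [show (fun x : ℝ => (Real.exp (-(a*x)) - Real.exp (-(b*x))) / x)
        = (fun x : ℝ => -((Real.exp (-(b*x)) - Real.exp (-(a*x))) / x)) by funext x; ring]
    rw [MeasureTheory.integral_neg, this]
    ring



noncomputable def psi : ℝ → ℝ := deriv (Real.log ∘ Real.Gamma)

lemma Gamma_diff {z : ℝ} (hz : 0 < z) : DifferentiableAt ℝ Real.Gamma z :=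
  Real.differentiableAt_Gamma fun m => ((neg_nonpos.mpr (Nat.cast_nonneg m)).trans_lt hz).ne'

lemma logGamma_diff {z : ℝ} (hz : 0 < z) : DifferentiableAt ℝ (Real.log ∘ Real.Gamma) z :=
  (Gamma_diff hz).log (Real.Gamma_pos_of_pos hz).ne'

lemma psi_eq {z : ℝ} (hz : 0 < z) : psi z = deriv Real.Gamma z / Real.Gamma z := by
  rw [psi, Function.comp_def, deriv.log (Gamma_diff hz) (Real.Gamma_pos_of_pos hz).ne']

lemma psi_rec {z : ℝ} (hz : 0 < z) : psi (z + 1) = psi z + 1 / z := by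
  rw [psi, ← deriv_comp_add_const, one_div, ← Real.deriv_log,
      ← deriv_add (logGamma_diff hz) (Real.differentiableAt_log hz.ne')]
  apply Filter.EventuallyEq.deriv_eq
  filter_upwards [eventually_gt_nhds hz] with x hx
  simp only [Function.comp_apply, Real.Gamma_add_one hx.ne',
    Real.log_mul hx.ne' (Real.Gamma_pos_of_pos hx).ne', add_comm]
  rfl

lemma psi_mono {x y : ℝ} (hx : 0 < x) (hxy : x ≤ y) : psi x ≤ psi y :=
  ConvexOn.monotoneOn_deriv Real.convexOn_log_Gamma
    (fun w hw => logGamma_diff hw) (mem_Ioi.mpr hx) (mem_Ioi.mpr (lt_of_lt_of_le hx hxy)) hxy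

lemma psi_le_log {z : ℝ} (hz : 0 < z) : psi (z + 1) ≤ Real.log (z + 1) := by
  have h := ConvexOn.deriv_le_slope Real.convexOn_log_Gamma
    (mem_Ioi.mpr (by linarith : (0:ℝ) < z + 1)) (mem_Ioi.mpr (by linarith : (0:ℝ) < z + 1 + 1))
    (by linarith) (logGamma_diff (by linarith))
  refine le_trans h (le_of_eq ?_)
  rw [slope_def_field, Function.comp_apply, Function.comp_apply,
    show z + 1 + 1 = (z + 1) + 1 from rfl, Real.Gamma_add_one (by positivity : (z+1:ℝ) ≠ 0),
    Real.log_mul (by positivity) (Real.Gamma_pos_of_pos (by linarith)).ne']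
  field_simp
  ring

lemma log_le_psi {z : ℝ} (hz : 0 < z) : Real.log z ≤ psi (z + 1) := by
  have h := ConvexOn.slope_le_deriv Real.convexOn_log_Gamma
    (mem_Ioi.mpr hz) (mem_Ioi.mpr (by linarith : (0:ℝ) < z + 1))
    (by linarith) (logGamma_diff (by linarith))
  refine le_trans (le_of_eq ?_) h
  rw [slope_def_field, Function.comp_apply, Function.comp_apply,
    Real.Gamma_add_one hz.ne', Real.log_mul hz.ne' (Real.Gamma_pos_of_pos hz).ne']
  field_simp
  ring

lemma tendsto_psi_sub_log {z : ℝ} (hz : 0 < z) :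
    Tendsto (fun n : ℕ => psi (z + n) - Real.log (z + n)) atTop (𝓝 0) := by
  refine squeeze_zero_norm' (a := fun n : ℕ => 1 / (z + n - 1)) ?_ ?_
  · filter_upwards [eventually_ge_atTop 1] with n hn
    have hzn1 : (0:ℝ) < z + n - 1 := by
      have : (1:ℝ) ≤ n := by exact_mod_cast hn
      linarith
    have e1 : z + (n:ℝ) = (z + n - 1) + 1 := by ring
    have hub : psi (z + n) ≤ Real.log (z + n) := by
      rw [e1]; exact le_trans (psi_le_log hzn1) (by rw [← e1])
    have hlb : Real.log (z + n - 1) ≤ psi (z + n) := by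
      have := log_le_psi hzn1; rw [← e1] at this; exact this
    have hlog : Real.log (z + n) - Real.log (z + n - 1) ≤ 1 / (z + n - 1) := by
      rw [← Real.log_div (by linarith) hzn1.ne']
      have := Real.log_le_sub_one_of_pos (show (0:ℝ) < (z+n)/(z+n-1) by positivity)
      calc Real.log ((z+n)/(z+n-1)) ≤ (z+n)/(z+n-1) - 1 := this
        _ = 1 / (z + n - 1) := by field_simp; ring
    rw [Real.norm_eq_abs, abs_le]
    constructor <;> [linarith; linarith]
  · have ht : Tendsto (fun n : ℕ => z + (n:ℝ) - 1) atTop atTop :=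
      tendsto_atTop_add_const_right _ _ (tendsto_atTop_add_const_left _ _ tendsto_natCast_atTop_atTop)
    simpa [one_div, Function.comp_def] using (tendsto_inv_atTop_zero.comp ht)


-- new material
noncomputable def Ifun (z : ℝ) : ℝ :=
  ∫ x in Ioi (0:ℝ), (1 / x - 1 / (1 - Real.exp (-x))) * Real.exp (-(z * x))

lemma kernel_continuousOn :
    ContinuousOn (fun x : ℝ => 1 / x - 1 / (1 - Real.exp (-x))) (Ioi 0) := by
  apply ContinuousOn.sub
  · exact ContinuousOn.div continuousOn_const continuousOn_id (fun x hx => ne_of_gt hx)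
  · exact ContinuousOn.div continuousOn_const
      (Continuous.continuousOn (by continuity))
      (fun x hx => (one_sub_exp_pos hx).ne')

lemma Ifun_abs_integrand {z x : ℝ} (hx : 0 < x) :
    |(1 / x - 1 / (1 - Real.exp (-x))) * Real.exp (-(z * x))| ≤ Real.exp (-(z * x)) := by
  rw [abs_mul, abs_of_pos (Real.exp_pos _)]
  have h1 : |1 / x - 1 / (1 - Real.exp (-x))| ≤ 1 := by
    rw [abs_sub_comm, abs_of_nonneg (kernel_nonneg hx)]
    exact kernel_le_one hx
  nlinarith [Real.exp_pos (-(z*x)), abs_nonneg (1 / x - 1 / (1 - Real.exp (-x)))]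

lemma Ifun_integrable {z : ℝ} (hz : 0 < z) :
    IntegrableOn (fun x : ℝ => (1 / x - 1 / (1 - Real.exp (-x))) * Real.exp (-(z * x))) (Ioi 0) := by
  refine (integrableOn_exp_neg_mul hz).mono' ?_ ?_
  · exact (kernel_continuousOn.mul (Continuous.continuousOn (by continuity))).aestronglyMeasurable
      measurableSet_Ioi
  · filter_upwards [ae_restrict_mem measurableSet_Ioi] with x hx
    rw [norm_eq_abs]; exact Ifun_abs_integrand (z := z) hx

lemma Ifun_abs_le {z : ℝ} (hz : 0 < z) : |Ifun z| ≤ 1 / z := by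
  rw [Ifun]
  have := norm_integral_le_of_norm_le (μ := volume.restrict (Ioi 0))
    (f := fun x : ℝ => (1 / x - 1 / (1 - Real.exp (-x))) * Real.exp (-(z * x)))
    (g := fun x : ℝ => Real.exp (-(z * x))) (integrableOn_exp_neg_mul hz) ?_
  · refine le_trans this (le_of_eq ?_)
    rw [show (fun x : ℝ => Real.exp (-(z * x))) = (fun x : ℝ => Real.exp (-(x * z))) by
      funext x; rw [mul_comm]]
    exact integral_exp_neg_mul_Ioi hz
  · filter_upwards [ae_restrict_mem measurableSet_Ioi] with x hx
    rw [norm_eq_abs]; exact Ifun_abs_integrand (z := z) hx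

lemma tendsto_Ifun {z : ℝ} (hz : 0 < z) :
    Tendsto (fun n : ℕ => Ifun (z + n)) atTop (𝓝 0) := by
  refine squeeze_zero_norm' (a := fun n : ℕ => 1 / (z + n)) ?_ ?_
  · filter_upwards with n
    exact Ifun_abs_le (by positivity)
  · have ht : Tendsto (fun n : ℕ => z + (n:ℝ)) atTop atTop :=
      tendsto_atTop_add_const_left _ _ tendsto_natCast_atTop_atTop
    simpa [one_div, Function.comp_def] using (tendsto_inv_atTop_zero.comp ht)

lemma Ifun_rec {z : ℝ} (hz : 0 < z) :
    Ifun z = Ifun (z + 1) + (Real.log (z + 1) - Real.log z) - 1 / z := by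
  have hz1 : (0:ℝ) < z + 1 := by linarith
  have key : Ifun z - Ifun (z + 1)
      = ∫ x in Ioi (0:ℝ),
          ((Real.exp (-(z*x)) - Real.exp (-((z+1)*x))) / x - Real.exp (-(x * z))) := by
    rw [Ifun, Ifun, ← integral_sub (Ifun_integrable hz) (Ifun_integrable hz1)]
    apply setIntegral_congr_fun measurableSet_Ioi
    intro x hx
    have hx0 : (0:ℝ) < x := hx
    have he : Real.exp (-((z+1)*x)) = Real.exp (-(z*x)) * Real.exp (-x) := by
      rw [← Real.exp_add]; ring_nf
    have ht := one_sub_exp_pos hx0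
    simp only [he]
    field_simp [he]
  have key2 : ∫ x in Ioi (0:ℝ),
      ((Real.exp (-(z*x)) - Real.exp (-((z+1)*x))) / x - Real.exp (-(x * z)))
      = (Real.log (z+1) - Real.log z) - 1 / z := by
    rw [integral_sub (frullani_integrable hz hz1)
      (by simpa [mul_comm, IntegrableOn] using integrableOn_exp_neg_mul hz),
      frullani hz hz1, integral_exp_neg_mul_Ioi hz]
  have := key.trans key2
  linarith

lemma Ifun_eq {z : ℝ} (hz : 0 < z) : Ifun z = psi z - Real.log z := by
  set D : ℝ → ℝ := fun w => psi w - Real.log w - Ifun w with hD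
  have hstep : ∀ w : ℝ, 0 < w → D w = D (w + 1) := by
    intro w hw
    simp only [hD]
    rw [psi_rec hw, Ifun_rec hw]
    ring
  have hiter : ∀ n : ℕ, D z = D (z + n) := by
    intro n
    induction n with
    | zero => simp
    | succ m ih =>
      rw [ih, hstep (z + m) (by positivity)]
      push_cast
      ring_nf
  have hlim : Tendsto (fun n : ℕ => D (z + n)) atTop (𝓝 0) := by
    have h1 := tendsto_psi_sub_log hz
    have h2 := tendsto_Ifun hz
    simpa [hD, sub_sub] using h1.sub h2
  have hconst : Tendsto (fun n : ℕ => D (z + n)) atTop (𝓝 (D z)) := by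
    simp only [← hiter]; exact tendsto_const_nhds
  have := tendsto_nhds_unique hconst hlim
  simp only [hD] at this
  linarith

lemma binom_exp_sum {n : ℕ} (hn : n ≠ 0) {z x : ℝ} (hx : 0 < x) :
    ∑ k ∈ Finset.range (n+1), (n.choose k : ℝ) * (-1)^k *
      ((Real.exp (-(z*x)) - Real.exp (-((z+k)*x))) / x)
    = -(Real.exp (-(z*x)) * (1 - Real.exp (-x))^n / x) := by
  have hu : ∀ k : ℕ, Real.exp (-((z + k)*x)) = Real.exp (-(z*x)) * (Real.exp (-x))^k := by
    intro k
    rw [← Real.exp_nat_mul, ← Real.exp_add]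
    ring_nf
  have step1 : ∑ k ∈ Finset.range (n+1), (n.choose k : ℝ) * (-1)^k *
      ((Real.exp (-(z*x)) - Real.exp (-((z+k)*x))) / x)
      = (Real.exp (-(z*x)) / x) * ∑ k ∈ Finset.range (n+1),
        ((n.choose k : ℝ) * (-1)^k - (n.choose k : ℝ) * (-Real.exp (-x))^k) := by
    rw [Finset.mul_sum]
    apply Finset.sum_congr rfl
    intro k _
    rw [hu k, neg_pow]
    field_simp
    ring
  have hA : ∑ k ∈ Finset.range (n+1), (n.choose k : ℝ) * (-1)^k = 0 := by
    have h := Int.alternating_sum_range_choose (n := n)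
    rw [if_neg hn] at h
    have := congrArg (fun t : ℤ => (t : ℝ)) h
    push_cast at this
    rw [← this]
    apply Finset.sum_congr rfl
    intro k _; ring
  have hB : ∑ k ∈ Finset.range (n+1), (n.choose k : ℝ) * (-Real.exp (-x))^k
      = (1 - Real.exp (-x))^n := by
    rw [show (1:ℝ) - Real.exp (-x) = -Real.exp (-x) + 1 by ring, add_pow]
    apply Finset.sum_congr rfl
    intro k _; simp [mul_comm]
  rw [step1, Finset.sum_sub_distrib, hA, hB]
  field_simp
  ring

lemma inner_sum_eq {z : ℝ} (hz : 0 < z) {n : ℕ} (hn : n ≠ 0) :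
    ∑ k ∈ Finset.range (n+1), (n.choose k : ℝ) * (-1)^k * Real.log (1 + k/z)
    = -∫ x in Ioi (0:ℝ), Real.exp (-(z*x)) * (1 - Real.exp (-x))^n / x := by
  have hlog : ∀ k : ℕ, Real.log (1 + k/z)
      = ∫ x in Ioi (0:ℝ), (Real.exp (-(z*x)) - Real.exp (-((z+k)*x))) / x := by
    intro k
    have hzk : (0:ℝ) < z + k := by positivity
    rw [frullani hz hzk, show (1:ℝ) + k/z = (z+k)/z by field_simp,
      Real.log_div hzk.ne' hz.ne']
  have step : ∑ k ∈ Finset.range (n+1), (n.choose k : ℝ) * (-1)^k * Real.log (1 + k/z)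
      = ∫ x in Ioi (0:ℝ), ∑ k ∈ Finset.range (n+1), (n.choose k : ℝ) * (-1)^k *
          ((Real.exp (-(z*x)) - Real.exp (-((z+k)*x))) / x) := by
    rw [MeasureTheory.integral_finset_sum]
    · apply Finset.sum_congr rfl
      intro k _
      rw [hlog k, ← MeasureTheory.integral_const_mul]
    · intro k _
      exact ((frullani_integrable hz (by positivity : (0:ℝ) < z + k)).const_mul _)
  rw [step, ← MeasureTheory.integral_neg]
  apply setIntegral_congr_fun measurableSet_Ioi
  intro x hx
  simp only
  rw [binom_exp_sum hn hx]


end DigammaAux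

/-- The digamma function `ψ(z) = Γ'(z)/Γ(z)`. -/
noncomputable def digamma (z : ℝ) : ℝ := deriv Real.Gamma z / Real.Gamma z

open DigammaAux in
theorem digamma_binomial_sum (z : ℝ) (hz : 0 < z) :
    HasSum
      (fun n : ℕ => (1 / ((n : ℝ) + 1)) *
        ∑ k ∈ Finset.range (n + 1),
          (n.choose k : ℝ) * (-1) ^ k * Real.log (1 + k / z))
      (digamma z - Real.log z) := by
  set F : ℕ → ℝ → ℝ := fun n x =>
    if n = 0 then 0
    else -((1/((n:ℝ)+1)) * (Real.exp (-(z*x)) * (1 - Real.exp (-x))^n / x)) with hF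
  set g : ℝ → ℝ := fun x => (1 / x - 1 / (1 - Real.exp (-x))) * Real.exp (-(z * x)) with hg
  -- each term equals the integral of F n
  have claim1 : ∀ n : ℕ, (1 / ((n : ℝ) + 1)) *
      ∑ k ∈ Finset.range (n + 1), (n.choose k : ℝ) * (-1) ^ k * Real.log (1 + k / z)
      = ∫ x in Ioi (0:ℝ), F n x := by
    intro n
    rcases eq_or_ne n 0 with rfl | hn
    · simp [hF]
    · rw [inner_sum_eq hz hn]
      simp only [hF, if_neg hn]
      rw [show (fun x : ℝ => -((1/((n:ℝ)+1)) * (Real.exp (-(z*x)) * (1 - Real.exp (-x))^n / x)))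
          = (fun x : ℝ => (-(1/((n:ℝ)+1))) * (Real.exp (-(z*x)) * (1 - Real.exp (-x))^n / x)) by
        funext x; ring, MeasureTheory.integral_const_mul]
      ring
  -- pointwise sum
  have claim2 : ∀ x ∈ Ioi (0:ℝ), HasSum (fun n => F n x) (g x) := by
    intro x hx
    have hx0 : (0:ℝ) < x := hx
    set t : ℝ := 1 - Real.exp (-x) with htdef
    have ht0 : 0 < t := one_sub_exp_pos hx0
    have ht1 : t < 1 := by
      have := Real.exp_pos (-x); simp only [htdef]; linarith
    have habs : |t| < 1 := by rw [abs_of_pos ht0]; exact ht1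
    have h0 : HasSum (fun n : ℕ => t^(n+1)/(n+1)) x := by
      have := Real.hasSum_pow_div_log_of_abs_lt_one habs
      have hlog : -Real.log (1 - t) = x := by
        simp only [htdef]
        rw [show (1:ℝ) - (1 - Real.exp (-x)) = Real.exp (-x) by ring, Real.log_exp]
        ring
      rwa [hlog] at this
    have h1 : HasSum (fun n : ℕ => t^(n+2)/((n:ℝ)+2)) (x - t) := by
      have h1'' : HasSum (fun n : ℕ => t^(n+1)/((n:ℝ)+1))
          ((x - t) + ∑ i ∈ Finset.range 1, t^(i+1)/((i:ℝ)+1)) := by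
        convert h0 using 1; norm_num
      have h1' := (hasSum_nat_add_iff (f := fun n : ℕ => t^(n+1)/((n:ℝ)+1)) 1).mpr h1''
      have hfe : (fun n : ℕ => t^(n+1+1)/(((n+1:ℕ):ℝ)+1)) = fun n : ℕ => t^(n+2)/((n:ℝ)+2) := by
        funext n; push_cast; ring_nf
      rwa [hfe] at h1'
    have h2 := h1.mul_left (-(Real.exp (-(z*x)) / (x * t)))
    have heq : (fun n : ℕ => (-(Real.exp (-(z*x)) / (x * t))) * (t^(n+2)/((n:ℝ)+2)))
        = fun n : ℕ => F (n+1) x := by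
      funext n
      simp only [hF, if_neg (Nat.succ_ne_zero n)]
      push_cast
      field_simp
      ring
    rw [heq] at h2
    have h3 := (hasSum_nat_add_iff (f := fun n => F n x) 1).mp h2
    have hval : -(Real.exp (-(z*x)) / (x * t)) * (x - t) + ∑ i ∈ Finset.range 1, F i x
        = g x := by
      simp only [hF, hg, Finset.range_one, Finset.sum_singleton, if_pos rfl, add_zero, htdef, eq_self_iff_true, if_true]
      have hne : (1:ℝ) - Real.exp (-x) ≠ 0 := (one_sub_exp_pos hx0).ne'
      field_simp
      ring
    rwa [hval] at h3
  -- sign / norm of F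
  have claimnorm : ∀ x ∈ Ioi (0:ℝ), ∀ n : ℕ, ‖F n x‖ = -F n x := by
    intro x hx n
    have hx0 : (0:ℝ) < x := hx
    rcases eq_or_ne n 0 with rfl | hn
    · simp [hF]
    · simp only [hF, if_neg hn, norm_neg, norm_eq_abs, neg_neg]
      have ht0 := (one_sub_exp_pos hx0).le
      rw [abs_of_nonneg (by positivity)]
  -- measurability
  have hmeas : ∀ n : ℕ, AEStronglyMeasurable (F n) (volume.restrict (Ioi 0)) := by
    intro n
    rcases eq_or_ne n 0 with rfl | hn
    · simp only [hF, if_pos rfl]; exact aestronglyMeasurable_const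
    · simp only [hF, if_neg hn]
      apply ContinuousOn.aestronglyMeasurable ?_ measurableSet_Ioi
      apply ContinuousOn.neg
      apply ContinuousOn.mul continuousOn_const
      exact ContinuousOn.div (Continuous.continuousOn (by continuity)) continuousOn_id
        (fun x hx => ne_of_gt hx)
  -- dominated convergence
  have key : HasSum (fun n : ℕ => ∫ x in Ioi (0:ℝ), F n x) (∫ x in Ioi (0:ℝ), g x) := by
    apply MeasureTheory.hasSum_integral_of_dominated_convergence
      (bound := fun n x => ‖F n x‖) hmeas
    · intro n; filter_upwards with x; exact le_refl _
    · filter_upwards [ae_restrict_mem measurableSet_Ioi] with x hx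
      exact ((claim2 x hx).neg.summable).congr (fun n => (claimnorm x hx n).symm)
    · apply Integrable.congr (Ifun_integrable hz).neg
      filter_upwards [ae_restrict_mem measurableSet_Ioi] with x hx
      have := ((claim2 x hx).neg).tsum_eq
      calc -(g x) = ∑' n, -(F n x) := this.symm
        _ = ∑' n, ‖F n x‖ := by congr 1; funext n; exact (claimnorm x hx n).symm
    · filter_upwards [ae_restrict_mem measurableSet_Ioi] with x hx
      exact claim2 x hx
  have hval : digamma z - Real.log z = ∫ x in Ioi (0:ℝ), g x := by
    have h1 : Ifun z = ∫ x in Ioi (0:ℝ), g x := rfl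
    rw [show digamma z = psi z from (psi_eq hz).symm, ← Ifun_eq hz, h1]
  rw [funext claim1, hval]
  exact key
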